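/- Any matrix A ∈ F^{d×d} can be written as a product Q_1·G_d(Y_1)^T·Q_2·…·G_d(Y_{d−1})^T·W·G_d(X_{d−1})·P_{d−1}·…·G_d(X_1)·P_1, where W is a diagonal matrix, the X_i, Y_i ∈ F^d are vectors, and the P_i, Q_i are permutation matrices. -/

import Mathlib

open Matrix

/-- The V-matrix `G_d(x)`: first `d−1` columns are the standard basis vectors
`e_1, …, e_{d−1}`, and the last column is `x`. -/
def Gmat {F : Type*} [Field F] (d : ℕ) (x : Fin d → F) : Matrix (Fin d) (Fin d) F :=
  Matrix.of fun i j => if (j : ℕ) = d - 1 then x i else if i = j then (1 : F) else 0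

/-- A permutation matrix. -/
def IsPermMatrix {F : Type*} [Field F] {α : Type*} [Fintype α] [DecidableEq α]
    (P : Matrix α α F) : Prop :=
  ∃ σ : Equiv.Perm α, P = σ.permMatrix F

namespace VHelper

variable {F : Type*} [Field F] {n : ℕ}

lemma gmat_apply (x : Fin (n+1) → F) (i j : Fin (n+1)) :
    Gmat (n+1) x i j = if j = Fin.last n then x i else if i = j then (1:F) else 0 := by
  have h : ((j:ℕ) = n + 1 - 1) ↔ j = Fin.last n := by
    simp [Fin.ext_iff]
  simp only [Gmat, Matrix.of_apply]
  rw [if_congr h rfl rfl]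

/-- key sum helper -/
lemma sum_gmat_vec (x : Fin (n+1) → F) (g : Fin (n+1) → F) (i : Fin (n+1)) :
    ∑ m, Gmat (n+1) x i m * g m
      = x i * g (Fin.last n) + (if i = Fin.last n then 0 else g i) := by
  have h1 : ∀ m : Fin (n+1), Gmat (n+1) x i m * g m
      = (if m = Fin.last n then x i * g m else 0)
        + (if m = Fin.last n then 0 else if i = m then g m else 0) := by
    intro m
    rw [gmat_apply]
    by_cases hm : m = Fin.last n <;> simp [hm] <;> split <;> simp
  rw [Finset.sum_congr rfl fun m _ => h1 m, Finset.sum_add_distrib]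
  congr 1
  · rw [Finset.sum_ite_eq' Finset.univ (Fin.last n) (fun m => x i * g m)]
    simp
  · by_cases hi : i = Fin.last n
    · rw [if_pos hi, Finset.sum_eq_zero]
      intro m _
      by_cases hm : m = Fin.last n
      · simp [hm]
      · simp [hm]
        intro h; exact absurd (h ▸ hi) hm
    · rw [if_neg hi, Finset.sum_eq_single i]
      · simp [hi]
      · intro m _ hmi
        by_cases hm : m = Fin.last n <;> simp [hm, fun h => hmi (h : i = m).symm]
        intro h; exact absurd h (fun h => hmi h.symm)
      · intro h; exact absurd (Finset.mem_univ i) h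

lemma mul_gmat (M : Matrix (Fin (n+1)) (Fin (n+1)) F) (v : Fin (n+1) → F) (i j : Fin (n+1)) :
    (M * Gmat (n+1) v) i j =
      if j = Fin.last n then ∑ m, M i m * v m else M i j := by
  rw [Matrix.mul_apply]
  by_cases hj : j = Fin.last n
  · simp only [if_pos hj]
    refine Finset.sum_congr rfl fun m _ => ?_
    rw [gmat_apply, if_pos hj]
  · simp only [if_neg hj]
    have : ∀ m : Fin (n+1), M i m * Gmat (n+1) v m j = if m = j then M i m else 0 := by
      intro m
      rw [gmat_apply, if_neg hj]
      by_cases h : m = j <;> simp [h, eq_comm]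
    rw [Finset.sum_congr rfl fun m _ => this m, Finset.sum_ite_eq' Finset.univ j]
    simp

lemma gmatT_mul (M : Matrix (Fin (n+1)) (Fin (n+1)) F) (u : Fin (n+1) → F) (i j : Fin (n+1)) :
    ((Gmat (n+1) u)ᵀ * M) i j =
      if i = Fin.last n then ∑ m, u m * M m j else M i j := by
  rw [Matrix.mul_apply]
  by_cases hi : i = Fin.last n
  · simp only [if_pos hi]
    refine Finset.sum_congr rfl fun m _ => ?_
    rw [Matrix.transpose_apply, gmat_apply, if_pos hi]
  · simp only [if_neg hi]
    have : ∀ m : Fin (n+1), (Gmat (n+1) u)ᵀ i m * M m j = if m = i then M m j else 0 := by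
      intro m
      rw [Matrix.transpose_apply, gmat_apply, if_neg hi]
      by_cases h : m = i <;> simp [h, eq_comm]
    rw [Finset.sum_congr rfl fun m _ => this m, Finset.sum_ite_eq' Finset.univ i]
    simp

def ginv (x : Fin (n+1) → F) : Fin (n+1) → F := fun i => if i = Fin.last n then 1 else - x i

lemma gmat_mul_ginv (x : Fin (n+1) → F) (hx : x (Fin.last n) = 1) :
    Gmat (n+1) x * Gmat (n+1) (ginv x) = 1 := by
  ext i j
  rw [mul_gmat]
  by_cases hj : j = Fin.last n
  · rw [if_pos hj, sum_gmat_vec]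
    by_cases hi : i = Fin.last n
    · simp [ginv, hi, hx, hj, Matrix.one_apply, hi.trans hj.symm]
    · have hij : i ≠ j := fun h => hi (h.trans hj)
      simp [ginv, hi, Matrix.one_apply, hij]
  · rw [if_neg hj, gmat_apply, if_neg hj, Matrix.one_apply]


lemma permMatrix_apply (σ : Equiv.Perm (Fin (n+1))) (i j : Fin (n+1)) :
    σ.permMatrix F i j = if σ i = j then 1 else 0 := by
  simp [Equiv.Perm.permMatrix, PEquiv.toMatrix_apply, Equiv.toPEquiv, eq_comm]

lemma permMatrix_mul (σ : Equiv.Perm (Fin (n+1))) (M : Matrix (Fin (n+1)) (Fin (n+1)) F)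
    (i j : Fin (n+1)) : (σ.permMatrix F * M) i j = M (σ i) j := by
  rw [Matrix.mul_apply]
  have : ∀ m : Fin (n+1), σ.permMatrix F i m * M m j = if m = σ i then M m j else 0 := by
    intro m; rw [permMatrix_apply]
    by_cases h : m = σ i <;> simp [h, eq_comm]
  rw [Finset.sum_congr rfl fun m _ => this m, Finset.sum_ite_eq' Finset.univ (σ i)]
  simp

lemma mul_permMatrix (σ : Equiv.Perm (Fin (n+1))) (M : Matrix (Fin (n+1)) (Fin (n+1)) F)
    (i j : Fin (n+1)) : (M * σ.permMatrix F) i j = M i (σ⁻¹ j) := by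
  rw [Matrix.mul_apply]
  have : ∀ m : Fin (n+1), M i m * σ.permMatrix F m j = if m = σ⁻¹ j then M i m else 0 := by
    intro m; rw [permMatrix_apply]
    have : (σ m = j) ↔ (m = σ⁻¹ j) := by
      constructor
      · intro h; simp [← h]
      · intro h; simp [h]
    rw [if_congr this rfl rfl]
    by_cases h : m = σ⁻¹ j <;> simp [h]
  rw [Finset.sum_congr rfl fun m _ => this m, Finset.sum_ite_eq' Finset.univ (σ⁻¹ j)]
  simp

lemma permMatrix_mul_permMatrix (σ τ : Equiv.Perm (Fin (n+1))) :
    (σ.permMatrix F) * (τ.permMatrix F) = (τ * σ).permMatrix F := by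
  ext i j
  rw [permMatrix_mul, permMatrix_apply, permMatrix_apply, Equiv.Perm.mul_apply]

lemma permMatrix_one : ((1 : Equiv.Perm (Fin (n+1))).permMatrix F) = 1 := by
  ext i j
  rw [permMatrix_apply, Matrix.one_apply]
  simp
  congr

lemma permMatrix_mul_inv_self (σ : Equiv.Perm (Fin (n+1))) :
    (σ.permMatrix F) * ((σ⁻¹).permMatrix F) = 1 := by
  rw [permMatrix_mul_permMatrix, inv_mul_cancel, permMatrix_one]


/-- `M` is reduced at level `k`: off-diagonal entries vanish unless both indices are
"active", i.e. `< k` or equal to the last index. -/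
def Red (k : ℕ) (M : Matrix (Fin (n+1)) (Fin (n+1)) F) : Prop :=
  ∀ i j : Fin (n+1), i ≠ j →
    ((k ≤ (i:ℕ) ∧ i ≠ Fin.last n) ∨ (k ≤ (j:ℕ) ∧ j ≠ Fin.last n)) → M i j = 0

def Act (κ : ℕ) (x : Fin (n+1)) : Prop := (x:ℕ) < κ ∨ x = Fin.last n

lemma not_act_iff {κ : ℕ} {x : Fin (n+1)} : ¬ Act κ x ↔ κ ≤ (x:ℕ) ∧ x ≠ Fin.last n := by
  unfold Act; rw [not_or, not_lt]

def Cmat (κ : ℕ) (M : Matrix (Fin (n+1)) (Fin (n+1)) F) : Matrix (Fin (n+1)) (Fin (n+1)) F :=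
  Matrix.of fun i j =>
    if i = Fin.last n ∨ j = Fin.last n ∨ ((i:ℕ) < κ ∧ (j:ℕ) < κ) then M i j
    else if i = j then 1 else 0

variable {κ : ℕ} {M : Matrix (Fin (n+1)) (Fin (n+1)) F}

lemma act_last {κ : ℕ} : Act (n := n) κ (Fin.last n) := Or.inr rfl

lemma c1 (hM : Red κ M) {j : Fin (n+1)} (hj : ¬ Act κ j) (i : Fin (n+1)) :
    Cmat κ M i j = if i = j then 1 else 0 := by
  obtain ⟨hj1, hj2⟩ := not_act_iff.mp hj
  by_cases hi : i = Fin.last n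
  · subst hi
    have hij : Fin.last n ≠ j := fun h => hj2 h.symm
    have hz : M (Fin.last n) j = 0 := hM _ j hij (Or.inr ⟨hj1, hj2⟩)
    simp [Cmat, hz, if_neg hij]
  · have hcond : ¬ (i = Fin.last n ∨ j = Fin.last n ∨ ((i:ℕ) < κ ∧ (j:ℕ) < κ)) := by
      push_neg; exact ⟨hi, hj2, fun _ => by omega⟩
    simp [Cmat, hcond]

lemma c2 (hM : Red κ M) {i : Fin (n+1)} (hi : ¬ Act κ i) (j : Fin (n+1)) :
    Cmat κ M i j = if i = j then 1 else 0 := by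
  obtain ⟨hi1, hi2⟩ := not_act_iff.mp hi
  by_cases hj : j = Fin.last n
  · subst hj
    have hij : i ≠ Fin.last n := hi2
    have hz : M i (Fin.last n) = 0 := hM i _ hij (Or.inl ⟨hi1, hi2⟩)
    simp [Cmat, hz, if_neg hij]
  · have hcond : ¬ (i = Fin.last n ∨ j = Fin.last n ∨ ((i:ℕ) < κ ∧ (j:ℕ) < κ)) := by
      push_neg; exact ⟨hi2, hj, fun h => by omega⟩
    simp [Cmat, hcond]

lemma c3 (hM : Red κ M) {j : Fin (n+1)} (hj : Act κ j) (i : Fin (n+1)) :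
    Cmat κ M i j = M i j := by
  by_cases hcond : i = Fin.last n ∨ j = Fin.last n ∨ ((i:ℕ) < κ ∧ (j:ℕ) < κ)
  · simp [Cmat, hcond]
  · push_neg at hcond
    obtain ⟨hi, hjl, himp⟩ := hcond
    have hjκ : (j:ℕ) < κ := hj.resolve_right hjl
    have hiκ : κ ≤ (i:ℕ) := by
      by_contra h; exact absurd (himp (by omega)) (by omega)
    have hij : i ≠ j := by
      intro h; rw [h] at hiκ; omega
    have : M i j = 0 := hM i j hij (Or.inl ⟨hiκ, hi⟩)
    have hcond' : ¬ (i = Fin.last n ∨ j = Fin.last n ∨ ((i:ℕ) < κ ∧ (j:ℕ) < κ)) := by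
      push_neg; exact ⟨hi, hjl, himp⟩
    simp [Cmat, hcond', if_neg hij, this]

lemma c4 (hM : Red κ M) {i : Fin (n+1)} (hi : Act κ i) (j : Fin (n+1)) :
    Cmat κ M i j = M i j := by
  by_cases hcond : i = Fin.last n ∨ j = Fin.last n ∨ ((i:ℕ) < κ ∧ (j:ℕ) < κ)
  · simp [Cmat, hcond]
  · push_neg at hcond
    obtain ⟨hil, hjl, himp⟩ := hcond
    have hiκ : (i:ℕ) < κ := hi.resolve_right hil
    have hjκ : κ ≤ (j:ℕ) := by
      by_contra h; exact absurd (himp hiκ) (by omega)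
    have hij : i ≠ j := by
      intro h; rw [h] at hiκ; omega
    have : M i j = 0 := hM i j hij (Or.inr ⟨hjκ, hjl⟩)
    have hcond' : ¬ (i = Fin.last n ∨ j = Fin.last n ∨ ((i:ℕ) < κ ∧ (j:ℕ) < κ)) := by
      push_neg; exact ⟨hil, hjl, himp⟩
    simp [Cmat, hcond', if_neg hij, this]

/-- Converting a row relation for `Cmat` into one for `M`. -/
lemma conv_row (hM : Red κ M) (w : Fin (n+1) → F) {j : Fin (n+1)}
    (hw : ∑ i, w i * Cmat κ M i j = 0) : (w ᵥ* M) j = 0 := by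
  have hvm : (w ᵥ* M) j = ∑ i, w i * M i j := by
    simp [Matrix.vecMul, dotProduct]
  by_cases hj : Act κ j
  · rw [hvm, Finset.sum_congr rfl fun i _ => by rw [← c3 hM hj i]]
    exact hw
  · have hwj : w j = 0 := by
      have : ∑ i, w i * Cmat κ M i j = w j := by
        rw [Finset.sum_congr rfl fun i _ => by
          rw [c1 hM hj i, mul_ite, mul_one, mul_zero]]
        simp [Finset.sum_ite_eq']
      rw [this] at hw; exact hw
    rw [hvm, Finset.sum_eq_single j]
    · rw [hwj, zero_mul]
    · intro i _ hij
      rw [hM i j hij (Or.inr (not_act_iff.mp hj)), mul_zero]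
    · intro h; exact absurd (Finset.mem_univ j) h

lemma conv_col (hM : Red κ M) (z : Fin (n+1) → F) {i : Fin (n+1)}
    (hz : ∑ j, Cmat κ M i j * z j = 0) : (M *ᵥ z) i = 0 := by
  have hvm : (M *ᵥ z) i = ∑ j, M i j * z j := by
    simp [Matrix.mulVec, dotProduct]
  by_cases hi : Act κ i
  · rw [hvm, Finset.sum_congr rfl fun j _ => by rw [← c4 hM hi j]]
    exact hz
  · have hzi : z i = 0 := by
      have : ∑ j, Cmat κ M i j * z j = z i := by
        rw [Finset.sum_congr rfl fun j _ => by
          rw [c2 hM hi j, ite_mul, one_mul, zero_mul]]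
        simp
      rw [this] at hz; exact hz
    rw [hvm, Finset.sum_eq_single i]
    · rw [hzi, mul_zero]
    · intro j _ hij
      rw [hM i j (fun h => hij h.symm) (Or.inl (not_act_iff.mp hi)), zero_mul]
    · intro h; exact absurd (Finset.mem_univ i) h

/-- The pivot lemma: existence of a good pivot row/column with elimination coefficients. -/
lemma pivot (κ : ℕ) (M : Matrix (Fin (n+1)) (Fin (n+1)) F) (hM : Red κ M) :
    ∃ r c : Fin (n+1), Act κ r ∧ Act κ c ∧
      ∃ w z : Fin (n+1) → F, w r = 1 ∧ z c = 1 ∧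
        (∀ j, j ≠ c → (w ᵥ* M) j = 0) ∧ (∀ i, i ≠ r → (M *ᵥ z) i = 0) := by
  classical
  set C := Cmat κ M with hC
  by_cases hdet : IsUnit C.det
  · -- invertible case
    have hCCi := Matrix.mul_nonsing_inv C hdet
    have hCiC := Matrix.nonsing_inv_mul C hdet
    have h1 : ∑ m, C (Fin.last n) m * C⁻¹ m (Fin.last n) = 1 := by
      have := congrFun (congrFun hCCi (Fin.last n)) (Fin.last n)
      rw [Matrix.mul_apply] at this
      rw [this, Matrix.one_apply_eq]
    obtain ⟨c, hc⟩ : ∃ m, C (Fin.last n) m * C⁻¹ m (Fin.last n) ≠ 0 := by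
      by_contra hcon; push_neg at hcon
      rw [Finset.sum_eq_zero fun m _ => hcon m] at h1
      exact one_ne_zero h1.symm
    have hCl : C (Fin.last n) c ≠ 0 := fun h => hc (by rw [h, zero_mul])
    have hCic : C⁻¹ c (Fin.last n) ≠ 0 := fun h => hc (by rw [h, mul_zero])
    have hactc : Act κ c := by
      by_contra hin
      apply hCl
      rw [hC, c1 hM hin (Fin.last n), if_neg (fun h : Fin.last n = c => hin (h ▸ act_last))]
    refine ⟨Fin.last n, c, act_last, hactc,
      fun i => C⁻¹ c i * (C⁻¹ c (Fin.last n))⁻¹,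
      fun j => C⁻¹ j (Fin.last n) * (C⁻¹ c (Fin.last n))⁻¹,
      mul_inv_cancel₀ hCic, mul_inv_cancel₀ hCic, ?_, ?_⟩
    · intro j hj
      apply conv_row hM
      have : ∀ i : Fin (n+1), (C⁻¹ c i * (C⁻¹ c (Fin.last n))⁻¹) * Cmat κ M i j
          = (C⁻¹ c i * C i j) * (C⁻¹ c (Fin.last n))⁻¹ := fun i => by
        rw [← hC]; ring
      rw [Finset.sum_congr rfl fun i _ => this i, ← Finset.sum_mul]
      have : ∑ i, C⁻¹ c i * C i j = 0 := by
        have := congrFun (congrFun hCiC c) j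
        rw [Matrix.mul_apply] at this
        rw [this, Matrix.one_apply_ne (fun h => hj h.symm)]
      rw [this, zero_mul]
    · intro i hi
      apply conv_col hM
      have heq : ∀ j : Fin (n+1), Cmat κ M i j * (C⁻¹ j (Fin.last n) * (C⁻¹ c (Fin.last n))⁻¹)
          = (C i j * C⁻¹ j (Fin.last n)) * (C⁻¹ c (Fin.last n))⁻¹ := fun j => by
        rw [← hC]; ring
      rw [Finset.sum_congr rfl fun j _ => heq j, ← Finset.sum_mul]
      have : ∑ j, C i j * C⁻¹ j (Fin.last n) = 0 := by
        have := congrFun (congrFun hCCi i) (Fin.last n)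
        rw [Matrix.mul_apply] at this
        rw [this, Matrix.one_apply_ne hi]
      rw [this, zero_mul]
  · -- singular case
    have hdet0 : C.det = 0 := by
      by_contra h; exact hdet (isUnit_iff_ne_zero.mpr h)
    obtain ⟨g, hg0, hgC⟩ := Matrix.exists_vecMul_eq_zero_iff.mpr hdet0
    obtain ⟨h, hh0, hhC⟩ := Matrix.exists_mulVec_eq_zero_iff.mpr hdet0
    obtain ⟨r, hr⟩ : ∃ r, g r ≠ 0 := by
      by_contra hcon; push_neg at hcon
      exact hg0 (funext fun i => hcon i)
    obtain ⟨c, hcne⟩ : ∃ c, h c ≠ 0 := by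
      by_contra hcon; push_neg at hcon
      exact hh0 (funext fun i => hcon i)
    have hgC' : ∀ j, ∑ i, g i * C i j = 0 := by
      intro j
      have := congrFun hgC j
      simpa [Matrix.vecMul, dotProduct] using this
    have hhC' : ∀ i, ∑ j, C i j * h j = 0 := by
      intro i
      have := congrFun hhC i
      simpa [Matrix.mulVec, dotProduct] using this
    have hactr : Act κ r := by
      by_contra hin
      apply hr
      have : ∑ i, g i * C i r = g r := by
        rw [Finset.sum_congr rfl fun i _ => by
          rw [hC, c1 hM hin i, mul_ite, mul_one, mul_zero]]
        simp [Finset.sum_ite_eq']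
      rw [← this, hgC' r]
    have hactc : Act κ c := by
      by_contra hin
      apply hcne
      have : ∑ j, C c j * h j = h c := by
        rw [Finset.sum_congr rfl fun j _ => by
          rw [hC, c2 hM hin j, ite_mul, one_mul, zero_mul]]
        simp
      rw [← this, hhC' c]
    refine ⟨r, c, hactr, hactc,
      fun i => g i * (g r)⁻¹, fun j => h j * (h c)⁻¹,
      mul_inv_cancel₀ hr, mul_inv_cancel₀ hcne, ?_, ?_⟩
    · intro j _
      apply conv_row hM
      have : ∀ i : Fin (n+1), (g i * (g r)⁻¹) * Cmat κ M i j
          = (g i * C i j) * (g r)⁻¹ := fun i => by rw [← hC]; ring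
      rw [Finset.sum_congr rfl fun i _ => this i, ← Finset.sum_mul, hgC' j, zero_mul]
    · intro i _
      apply conv_col hM
      have : ∀ j : Fin (n+1), Cmat κ M i j * (h j * (h c)⁻¹)
          = (C i j * h j) * (h c)⁻¹ := fun j => by rw [← hC]; ring
      rw [Finset.sum_congr rfl fun j _ => this j, ← Finset.sum_mul, hhC' i, zero_mul]


lemma permMatrix_self_mul_self (s : Equiv.Perm (Fin (n+1))) (hs : s⁻¹ = s) :
    (s.permMatrix F) * (s.permMatrix F) = 1 := by
  rw [permMatrix_mul_permMatrix]
  have h2 : s * s = 1 := by nth_rewrite 1 [← hs]; exact inv_mul_cancel s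
  rw [h2, permMatrix_one]

lemma claim (k : ℕ) (hk : k ≤ n) :
    ∀ M : Matrix (Fin (n+1)) (Fin (n+1)) F, Red k M →
    ∀ σ : Equiv.Perm (Fin (n+1)),
    ∃ (L R : List (Matrix (Fin (n+1)) (Fin (n+1)) F)) (W : Matrix (Fin (n+1)) (Fin (n+1)) F),
      L.length = k ∧ R.length = k ∧ W.IsDiag ∧
      (∀ B ∈ L, ∃ Q y, IsPermMatrix Q ∧ B = Q * (Gmat (n+1) y)ᵀ) ∧
      (∀ B ∈ R, ∃ P x, IsPermMatrix P ∧ B = Gmat (n+1) x * P) ∧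
      σ.permMatrix F * M * (σ⁻¹).permMatrix F = L.prod * W * R.prod := by
  induction k with
  | zero =>
    intro M hM σ
    refine ⟨[], [], σ.permMatrix F * M * (σ⁻¹).permMatrix F, rfl, rfl, ?_, by simp, by simp,
      by simp⟩
    intro i j hij
    have happ : (σ.permMatrix F * M * (σ⁻¹).permMatrix F) i j = M (σ i) (σ j) := by
      rw [mul_permMatrix, permMatrix_mul, inv_inv]
    rw [happ]
    have hne : σ i ≠ σ j := fun h => hij (σ.injective h)
    by_cases h : σ i = Fin.last n
    · have : σ j ≠ Fin.last n := fun h' => hne (h.trans h'.symm)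
      exact hM _ _ hne (Or.inr ⟨Nat.zero_le _, this⟩)
    · exact hM _ _ hne (Or.inl ⟨Nat.zero_le _, h⟩)
  | succ k ih =>
    intro M hM σ
    obtain ⟨r, c, hactr, hactc, w, z, hwr, hzc, hwM, hzM⟩ := pivot (k+1) M hM
    set ℓ : Fin (n+1) := Fin.last n with hℓ
    set s : Equiv.Perm (Fin (n+1)) := Equiv.swap r ℓ with hs
    set t : Equiv.Perm (Fin (n+1)) := Equiv.swap c ℓ with ht
    have hkn : k < n := by omega
    set kf : Fin (n+1) := ⟨k, by omega⟩ with hkf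
    set π : Equiv.Perm (Fin (n+1)) := Equiv.swap kf ℓ with hπ
    have hsinv : s⁻¹ = s := by rw [hs, Equiv.swap_inv]
    have htinv : t⁻¹ = t := by rw [ht, Equiv.swap_inv]
    have hπinv : π⁻¹ = π := by rw [hπ, Equiv.swap_inv]
    set u : Fin (n+1) → F := w ∘ s with hu
    set v : Fin (n+1) → F := z ∘ t with hv
    set N : Matrix (Fin (n+1)) (Fin (n+1)) F := s.permMatrix F * M * t.permMatrix F with hN
    set E : Matrix (Fin (n+1)) (Fin (n+1)) F := (Gmat (n+1) u)ᵀ * N * Gmat (n+1) v with hE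
    set M' : Matrix (Fin (n+1)) (Fin (n+1)) F := π.permMatrix F * E * π.permMatrix F with hM'
    have hNapp : ∀ i j, N i j = M (s i) (t j) := by
      intro i j
      rw [hN, mul_permMatrix, permMatrix_mul, htinv]
    have hM'app : ∀ i j, M' i j = E (π i) (π j) := by
      intro i j
      rw [hM', mul_permMatrix, permMatrix_mul, hπinv]
    have huℓ : u ℓ = 1 := by
      rw [hu, Function.comp_apply, hs, Equiv.swap_apply_right, hwr]
    have hvℓ : v ℓ = 1 := by
      rw [hv, Function.comp_apply, ht, Equiv.swap_apply_right, hzc]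
    -- inactive index facts
    have hinact_ne : ∀ (x p : Fin (n+1)), Act (k+1) p → k+1 ≤ (x:ℕ) → x ≠ ℓ → x ≠ p := by
      intro x p hp h1 h2
      rcases hp with hlt | he
      · exact Fin.ne_of_val_ne (by omega)
      · rw [he]; exact h2
    -- E entry facts
    have hErow : ∀ j, j ≠ ℓ → E ℓ j = 0 := by
      intro j hj
      have h1 : E ℓ j = ((Gmat (n+1) u)ᵀ * N) ℓ j := by
        rw [hE, mul_gmat, if_neg hj]
      rw [h1, gmatT_mul, if_pos rfl]
      have h2 : ∀ m, u m * N m j = w (s m) * M (s m) (t j) := by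
        intro m; rw [hu, Function.comp_apply, hNapp]
      rw [Finset.sum_congr rfl fun m _ => h2 m,
        Equiv.sum_comp s (fun m => w m * M m (t j))]
      have htj : t j ≠ c := by
        intro h
        apply hj
        have := congrArg t h
        rw [Equiv.swap_apply_self, ht, Equiv.swap_apply_left] at this
        exact this
      have := hwM (t j) htj
      simpa [Matrix.vecMul, dotProduct] using this
    have hEcol : ∀ i, i ≠ ℓ → E i ℓ = 0 := by
      intro i hi
      have h1 : E i ℓ = ∑ m, ((Gmat (n+1) u)ᵀ * N) i m * v m := by
        rw [hE, mul_gmat, if_pos rfl]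
      rw [h1, Finset.sum_congr rfl fun m _ => by rw [gmatT_mul, if_neg hi]]
      have h2 : ∀ m, N i m * v m = M (s i) (t m) * z (t m) := by
        intro m; rw [hv, Function.comp_apply, hNapp]
      rw [Finset.sum_congr rfl fun m _ => h2 m,
        Equiv.sum_comp t (fun m => M (s i) m * z m)]
      have hsi : s i ≠ r := by
        intro h
        apply hi
        have := congrArg s h
        rw [Equiv.swap_apply_self, hs, Equiv.swap_apply_left] at this
        exact this
      have := hzM (s i) hsi
      simpa [Matrix.mulVec, dotProduct] using this
    have hEinner : ∀ i j, i ≠ ℓ → j ≠ ℓ → E i j = N i j := by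
      intro i j hi hj
      rw [hE, mul_gmat, if_neg hj, gmatT_mul, if_neg hi]
    -- N is still reduced at level k+1
    have hNred : Red (k+1) N := by
      intro i j hij hcond
      rcases hcond with ⟨h1, h2⟩ | ⟨h1, h2⟩
      · have hir : i ≠ r := hinact_ne i r hactr h1 h2
        have hsi : s i = i := by rw [hs]; exact Equiv.swap_apply_of_ne_of_ne hir h2
        rw [hNapp, hsi]
        have hij' : i ≠ t j := by
          intro h
          apply hij
          have hic : i ≠ c := hinact_ne i c hactc h1 h2
          have hti : t i = i := by rw [ht]; exact Equiv.swap_apply_of_ne_of_ne hic h2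
          have := congrArg t h
          rw [hti, Equiv.swap_apply_self] at this
          exact this
        exact hM i (t j) hij' (Or.inl ⟨h1, h2⟩)
      · have hjc : j ≠ c := hinact_ne j c hactc h1 h2
        have htj : t j = j := by rw [ht]; exact Equiv.swap_apply_of_ne_of_ne hjc h2
        rw [hNapp, htj]
        have hij' : s i ≠ j := by
          intro h
          apply hij
          have hjr : j ≠ r := hinact_ne j r hactr h1 h2
          have hsj : s j = j := by rw [hs]; exact Equiv.swap_apply_of_ne_of_ne hjr h2
          have := congrArg s h
          rw [Equiv.swap_apply_self, hsj] at this
          exact this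
        exact hM (s i) j hij' (Or.inr ⟨h1, h2⟩)
    -- M' is reduced at level k
    have hπkf : π kf = ℓ := by rw [hπ]; exact Equiv.swap_apply_left kf ℓ
    have hπeq : ∀ x : Fin (n+1), π x = ℓ → x = kf := by
      intro x hx
      have := congrArg π hx
      rw [hπ, Equiv.swap_apply_self, Equiv.swap_apply_right] at this
      exact this
    have hkfℓ : kf ≠ ℓ := by
      rw [hkf, hℓ]; exact Fin.ne_of_val_ne (by simp; omega)
    have hM'red : Red k M' := by
      intro i j hij hcond
      rcases hcond with ⟨h1, h2⟩ | ⟨h1, h2⟩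
      · by_cases hik : i = kf
        · have : π i = ℓ := by rw [hik, hπkf]
          rw [hM'app, this]
          apply hErow
          intro h
          exact hij (hik.trans (hπeq j h).symm)
        · have h1' : k+1 ≤ (i:ℕ) := by
            have : (i:ℕ) ≠ k := fun h => hik (Fin.ext h)
            omega
          have hπi : π i = i := by
            rw [hπ]; exact Equiv.swap_apply_of_ne_of_ne hik h2
          rw [hM'app, hπi]
          by_cases hπj : π j = ℓ
          · rw [hπj]; exact hEcol i h2
          · rw [hEinner i (π j) h2 hπj]
            have : i ≠ π j := by
              intro h
              apply hij
              have := congrArg π h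
              rw [hπ, Equiv.swap_apply_self, ← hπ] at this
              exact hπi ▸ this
            exact hNred i (π j) this (Or.inl ⟨h1', h2⟩)
      · by_cases hjk : j = kf
        · have : π j = ℓ := by rw [hjk, hπkf]
          rw [hM'app, this]
          apply hEcol
          intro h
          exact hij ((hπeq i h).trans hjk.symm)
        · have h1' : k+1 ≤ (j:ℕ) := by
            have : (j:ℕ) ≠ k := fun h => hjk (Fin.ext h)
            omega
          have hπj : π j = j := by
            rw [hπ]; exact Equiv.swap_apply_of_ne_of_ne hjk h2
          rw [hM'app, hπj]
          by_cases hπi : π i = ℓ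
          · rw [hπi]; exact hErow j h2
          · rw [hEinner (π i) j hπi h2]
            have : π i ≠ j := by
              intro h
              apply hij
              have := congrArg π h
              rw [hπ, Equiv.swap_apply_self, ← hπ] at this
              exact hπj ▸ this
            exact hNred (π i) j this (Or.inr ⟨h1', h2⟩)
    -- apply IH
    obtain ⟨L', R', W, hLlen, hRlen, hWdiag, hLform, hRform, hkey⟩ :=
      ih (by omega) M' hM'red π
    rw [hπinv] at hkey
    -- algebraic assembly
    have hGu : Gmat (n+1) u * Gmat (n+1) (ginv u) = 1 := gmat_mul_ginv u huℓ
    have hGv : Gmat (n+1) v * Gmat (n+1) (ginv v) = 1 := gmat_mul_ginv v hvℓ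
    have hGuT : (Gmat (n+1) (ginv u))ᵀ * (Gmat (n+1) u)ᵀ = 1 := by
      rw [← Matrix.transpose_mul, hGu, Matrix.transpose_one]
    have hPs : (s.permMatrix F) * (s.permMatrix F) = 1 := permMatrix_self_mul_self s hsinv
    have hPt : (t.permMatrix F) * (t.permMatrix F) = 1 := permMatrix_self_mul_self t htinv
    have hPπ : (π.permMatrix F) * (π.permMatrix F) = 1 := permMatrix_self_mul_self π hπinv
    have hE1 : π.permMatrix F * M' * π.permMatrix F = E := by
      rw [hM']
      simp only [Matrix.mul_assoc]
      rw [hPπ, Matrix.mul_one, ← Matrix.mul_assoc, ← Matrix.mul_assoc, hPπ, Matrix.one_mul]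
    have hNE : (Gmat (n+1) (ginv u))ᵀ * E * Gmat (n+1) (ginv v) = N := by
      rw [hE]
      simp only [Matrix.mul_assoc]
      rw [hGv, Matrix.mul_one, ← Matrix.mul_assoc, ← Matrix.mul_assoc, hGuT, Matrix.one_mul]
    have hM1 : s.permMatrix F * ((Gmat (n+1) (ginv u))ᵀ * E * Gmat (n+1) (ginv v))
        * t.permMatrix F = M := by
      rw [hNE, hN]
      simp only [Matrix.mul_assoc]
      rw [hPt, Matrix.mul_one, ← Matrix.mul_assoc, hPs, Matrix.one_mul]
    refine ⟨(σ.permMatrix F * s.permMatrix F * (Gmat (n+1) (ginv u))ᵀ) :: L',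
      R' ++ [Gmat (n+1) (ginv v) * (t.permMatrix F * (σ⁻¹).permMatrix F)], W,
      by simp [hLlen], by simp [hRlen], hWdiag, ?_, ?_, ?_⟩
    · intro B hB
      rcases List.mem_cons.mp hB with hB | hB
      · exact ⟨σ.permMatrix F * s.permMatrix F, ginv u,
          ⟨s * σ, permMatrix_mul_permMatrix σ s⟩, hB⟩
      · exact hLform B hB
    · intro B hB
      rcases List.mem_append.mp hB with hB | hB
      · exact hRform B hB
      · rw [List.mem_singleton.mp hB]
        exact ⟨t.permMatrix F * (σ⁻¹).permMatrix F, ginv v,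
          ⟨σ⁻¹ * t, permMatrix_mul_permMatrix t σ⁻¹⟩, rfl⟩
    · calc σ.permMatrix F * M * (σ⁻¹).permMatrix F
          = σ.permMatrix F
            * (s.permMatrix F
              * ((Gmat (n+1) (ginv u))ᵀ * (π.permMatrix F * M' * π.permMatrix F)
                * Gmat (n+1) (ginv v))
              * t.permMatrix F) * (σ⁻¹).permMatrix F := by rw [hE1, hM1]
        _ = (σ.permMatrix F * s.permMatrix F * (Gmat (n+1) (ginv u))ᵀ)
            * (π.permMatrix F * M' * π.permMatrix F)
            * (Gmat (n+1) (ginv v) * (t.permMatrix F * (σ⁻¹).permMatrix F)) := by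
              simp only [Matrix.mul_assoc]
        _ = (σ.permMatrix F * s.permMatrix F * (Gmat (n+1) (ginv u))ᵀ)
            * (L'.prod * W * R'.prod)
            * (Gmat (n+1) (ginv v) * (t.permMatrix F * (σ⁻¹).permMatrix F)) := by
              rw [hkey]
        _ = ((σ.permMatrix F * s.permMatrix F * (Gmat (n+1) (ginv u))ᵀ) :: L').prod * W
            * (R' ++ [Gmat (n+1) (ginv v) * (t.permMatrix F * (σ⁻¹).permMatrix F)]).prod := by
              rw [List.prod_cons, List.prod_append, List.prod_singleton]
              simp only [Matrix.mul_assoc]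


lemma final (A : Matrix (Fin (n+1)) (Fin (n+1)) F) :
    ∃ (X Y : Fin n → Fin (n+1) → F)
      (P Q : Fin n → Matrix (Fin (n+1)) (Fin (n+1)) F)
      (W : Matrix (Fin (n+1)) (Fin (n+1)) F),
      W.IsDiag ∧ (∀ i, IsPermMatrix (P i)) ∧ (∀ i, IsPermMatrix (Q i)) ∧
      A = (List.ofFn fun i => Q i * (Gmat (n+1) (Y i))ᵀ).prod * W *
            ((List.ofFn fun i => Gmat (n+1) (X i) * P i).reverse).prod := by
  have hRed : Red n A := by
    intro i j hij hcond
    exfalso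
    rcases hcond with ⟨h1, h2⟩ | ⟨h1, h2⟩
    · exact h2 (Fin.ext (by have := i.isLt; simp [Fin.val_last]; omega))
    · exact h2 (Fin.ext (by have := j.isLt; simp [Fin.val_last]; omega))
  obtain ⟨L, R, W, hLlen, hRlen, hW, hLf, hRf, hkey⟩ := claim n le_rfl A hRed 1
  rw [inv_one, permMatrix_one, Matrix.one_mul, Matrix.mul_one] at hkey
  -- left list to functions
  have hLi : ∀ i : Fin n, ∃ Qy : Matrix (Fin (n+1)) (Fin (n+1)) F × (Fin (n+1) → F),
      IsPermMatrix Qy.1 ∧ L.get (Fin.cast hLlen.symm i) = Qy.1 * (Gmat (n+1) Qy.2)ᵀ := by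
    intro i
    obtain ⟨Q, y, h1, h2⟩ := hLf _ (L.get_mem _)
    exact ⟨(Q, y), h1, h2⟩
  choose QY hQY1 hQY2 using hLi
  have hLof : L = List.ofFn (fun i : Fin n => (QY i).1 * (Gmat (n+1) (QY i).2)ᵀ) := by
    refine List.ext_get (by simp [hLlen]) ?_
    intro i h1 h2
    rw [List.get_ofFn]
    exact hQY2 ⟨i, by omega⟩
  -- right list (reversed) to functions
  have hRi : ∀ i : Fin n, ∃ Px : Matrix (Fin (n+1)) (Fin (n+1)) F × (Fin (n+1) → F),
      IsPermMatrix Px.1 ∧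
        R.reverse.get (Fin.cast (by simp [hRlen]) i) = Gmat (n+1) Px.2 * Px.1 := by
    intro i
    obtain ⟨P, x, h1, h2⟩ := hRf _ (List.mem_reverse.mp (R.reverse.get_mem _))
    exact ⟨(P, x), h1, h2⟩
  choose PX hPX1 hPX2 using hRi
  have hRof : R.reverse = List.ofFn (fun i : Fin n => Gmat (n+1) (PX i).2 * (PX i).1) := by
    refine List.ext_get (by simp [hRlen]) ?_
    intro i h1 h2
    rw [List.get_ofFn]
    exact hPX2 ⟨i, by rw [List.length_reverse] at h1; omega⟩
  refine ⟨fun i => (PX i).2, fun i => (QY i).2, fun i => (PX i).1, fun i => (QY i).1, W,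
    hW, hPX1, hQY1, ?_⟩
  rw [← hLof, ← hRof, List.reverse_reverse]
  exact hkey


end VHelper

theorem factor_into_V_matrices {F : Type*} [Field F] (d : ℕ) (hd : 2 ≤ d)
    (A : Matrix (Fin d) (Fin d) F) :
    ∃ (X Y : Fin (d - 1) → Fin d → F)
      (P Q : Fin (d - 1) → Matrix (Fin d) (Fin d) F)
      (W : Matrix (Fin d) (Fin d) F),
      W.IsDiag ∧ (∀ i, IsPermMatrix (P i)) ∧ (∀ i, IsPermMatrix (Q i)) ∧
      A = (List.ofFn fun i => Q i * (Gmat d (Y i))ᵀ).prod * W *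
            ((List.ofFn fun i => Gmat d (X i) * P i).reverse).prod := by
  obtain ⟨n, rfl⟩ : ∃ n, d = n + 1 := ⟨d - 1, by omega⟩
  exact VHelper.final A
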